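/- arXiv:2207.14021 — 2 statements merged into one kernel-verified Lean document; each statement's English description precedes it below -/
import Mathlib

section
/- Let A be an abelian semigroup and M an abelian group, and suppose that for each d ≥ 1 the map x ↦ d!·x on A is bijective. If f : A → M satisfies Δ_{u_1} ⋯ Δ_{u_{n+1}} f = 0 for all u_1, …, u_{n+1} ∈ A, then f admits a polynomial expansion f = Σ_{k=0}^n f_k* where each f_k : A^k → M is symmetric and an additive homomorphism in each of its variables. -/
/-- The difference operator: `(deltaOp u f) a = f (a + u) - f a`. -/
def deltaOp {A M : Type*} [Add A] [Sub M] (u : A) (f : A → M) : A → M :=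
  fun a => f (a + u) - f a

/-- `psmul n a` is `n • a` for `n ≥ 1`, in an additive semigroup
(with the junk value `psmul 0 a = a`). -/
def psmul {A : Type*} [Add A] : ℕ → A → A
  | 0, a => a
  | 1, a => a
  | n + 2, a => psmul (n + 1) a + a

section Lemmas
variable {A M : Type*} [AddCommSemigroup A] [AddCommGroup M]

lemma deltaOp_leftComm (u v : A) (f : A → M) :
    deltaOp u (deltaOp v f) = deltaOp v (deltaOp u f) := by
  funext a
  simp only [deltaOp]
  rw [add_right_comm]
  abel

lemma foldr_deltaOp_append (l : List A) (c : A) (f : A → M) :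
    List.foldr deltaOp f (l ++ [c]) = List.foldr deltaOp (deltaOp c f) l := by
  rw [List.foldr_append]; rfl

lemma deltaOp_sub (u : A) (f g : A → M) :
    deltaOp u (f - g) = deltaOp u f - deltaOp u g := by
  funext a; simp only [deltaOp, Pi.sub_apply]; abel

lemma foldr_deltaOp_sub (l : List A) (f g : A → M) :
    List.foldr deltaOp (f - g) l = List.foldr deltaOp f l - List.foldr deltaOp g l := by
  induction l with
  | nil => rfl
  | cons c l ih => simp only [List.foldr_cons, ih, deltaOp_sub]

lemma deltaOp_sum {ι : Type*} (s : Finset ι) (u : A) (f : ι → A → M) :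
    deltaOp u (∑ i ∈ s, f i) = ∑ i ∈ s, deltaOp u (f i) := by
  funext a
  simp only [deltaOp, Finset.sum_apply, Finset.sum_sub_distrib]

lemma foldr_deltaOp_sum {ι : Type*} (s : Finset ι) (l : List A) (f : ι → A → M) :
    List.foldr deltaOp (∑ i ∈ s, f i) l = ∑ i ∈ s, List.foldr deltaOp (f i) l := by
  induction l with
  | nil => rfl
  | cons c l ih => simp only [List.foldr_cons, ih, deltaOp_sum]

lemma deltaOp_add_add (a b : A) (f : A → M) :
    deltaOp (a + b) f = deltaOp a f + deltaOp b f + deltaOp b (deltaOp a f) := by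
  funext x
  simp only [deltaOp, Pi.add_apply]
  rw [show x + (a + b) = x + b + a by rw [add_assoc, add_comm b a]]
  abel

lemma eq_of_deltaOp_eq_zero (R : A → M) (h : ∀ v, deltaOp v R = 0) (a b : A) : R a = R b := by
  have h' : ∀ x v : A, R (x + v) = R x := by
    intro x v
    have := congrFun (h v) x
    simpa [deltaOp, sub_eq_zero] using this
  calc R a = R (a + b) := (h' a b).symm
    _ = R (b + a) := by rw [add_comm]
    _ = R b := h' b a

lemma psmul_succ (d : ℕ) (hd : 1 ≤ d) (a : A) : psmul (d + 1) a = psmul d a + a := by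
  match d, hd with
  | d + 1, _ => rfl

lemma psmul_add (a b : A) : ∀ d : ℕ, psmul d (a + b) = psmul d a + psmul d b
  | 0 => rfl
  | 1 => rfl
  | (d + 2) => by
    show psmul (d + 1) (a + b) + (a + b) = psmul (d + 1) a + a + (psmul (d + 1) b + b)
    rw [psmul_add a b (d + 1)]
    exact add_add_add_comm _ _ _ _

lemma smul_out {m : ℕ} (G : (Fin m → A) → M) (j : Fin m)
    (hadd : ∀ x a b, G (Function.update x j (a + b))
      = G (Function.update x j a) + G (Function.update x j b)) :
    ∀ d, 1 ≤ d → ∀ (x : Fin m → A) (y : A),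
      G (Function.update x j (psmul d y)) = d • G (Function.update x j y) := by
  intro d
  induction d with
  | zero => intro h; omega
  | succ d ih =>
    intro _ x y
    rcases Nat.eq_zero_or_pos d with h1 | h1
    · subst h1; simp [psmul]
    · rw [psmul_succ d h1, hadd, ih h1, succ_nsmul]

end Lemmas

section S2
variable {A M : Type*} [AddCommSemigroup A] [AddCommGroup M]


lemma multi_expand {m : ℕ} (F : (Fin m → A) → M)
    (ha : ∀ (j : Fin m) (x : Fin m → A) (a b : A),
      F (Function.update x j (a + b)) = F (Function.update x j a) + F (Function.update x j b)) :
    ∀ (T : Finset (Fin m)) (x y : Fin m → A),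
      F (fun i => if i ∈ T then x i + y i else y i)
        = ∑ S ∈ T.powerset, F (fun i => if i ∈ S then x i else y i) := by
  intro T
  induction T using Finset.induction_on with
  | empty => intro x y; simp
  | @insert a T h ih =>
    intro x y
    have h1 : (fun i => if i ∈ insert a T then x i + y i else y i)
        = Function.update (fun i => if i ∈ T then x i + y i else y i) a (x a + y a) := by
      funext i
      rcases eq_or_ne i a with rfl | hi
      · simp [h]
      · simp [Function.update_of_ne hi, hi]
    have h2 : Function.update (fun i => if i ∈ T then x i + y i else y i) a (y a)
        = fun i => if i ∈ T then x i + y i else y i := by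
      funext i
      rcases eq_or_ne i a with rfl | hi
      · simp [h]
      · simp [Function.update_of_ne hi]
    have h3 : Function.update (fun i => if i ∈ T then x i + y i else y i) a (x a)
        = fun i => if i ∈ T then x i + (Function.update y a (x a)) i
            else (Function.update y a (x a)) i := by
      funext i
      rcases eq_or_ne i a with rfl | hi
      · simp [h]
      · simp [Function.update_of_ne hi]
    rw [h1, ha a _ (x a) (y a), h2, h3, ih x y, ih x (Function.update y a (x a)),
      Finset.sum_powerset_insert h]
    rw [add_comm]
    congr 1
    refine Finset.sum_congr rfl ?_
    intro S hS
    rw [Finset.mem_powerset] at hS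
    have haS : a ∉ S := fun hc => h (hS hc)
    congr 1
    funext i
    rcases eq_or_ne i a with rfl | hi
    · simp [haS, Function.update_self]
    · by_cases hiS : i ∈ S <;> simp [hiS, hi, Function.update_of_ne hi]

end S2

section S3
variable {A M : Type*} [AddCommSemigroup A] [AddCommGroup M]

lemma deltaOp_P {m : ℕ} (F : (Fin m → A) → M)
    (ha : ∀ (j : Fin m) (x : Fin m → A) (a b : A),
      F (Function.update x j (a + b)) = F (Function.update x j a) + F (Function.update x j b))
    (K : Finset (Fin m)) (v : Fin m → A) (c : A) :
    deltaOp c (fun a => F (fun i => if i ∈ K then a else v i))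
      = ∑ S ∈ K.powerset.erase ∅,
          (fun a => F (fun i => if i ∈ K \ S then a else if i ∈ S then c else v i)) := by
  funext a
  simp only [deltaOp]
  have e1 : (fun i => if i ∈ K then a + c else v i)
      = fun i => if i ∈ K then (fun _ : Fin m => c) i + (fun i => if i ∈ K then a else v i) i
          else (fun i => if i ∈ K then a else v i) i := by
    funext i; by_cases hi : i ∈ K <;> simp [hi, add_comm]
  rw [e1, multi_expand F ha K (fun _ => c) _]
  rw [← Finset.sum_erase_add _ _ (Finset.empty_mem_powerset K)]
  have e2 : F (fun i => if i ∈ (∅ : Finset (Fin m)) then c else if i ∈ K then a else v i)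
      = F (fun i => if i ∈ K then a else v i) := by simp
  rw [e2, add_sub_cancel_right, Finset.sum_apply]
  refine Finset.sum_congr rfl ?_
  intro S hS
  rw [Finset.mem_erase, Finset.mem_powerset] at hS
  congr 1
  funext i
  by_cases hiS : i ∈ S
  · have hiK : i ∈ K := hS.2 hiS
    simp [Finset.mem_sdiff, hiS, hiK]
  · by_cases hiK : i ∈ K <;> simp [Finset.mem_sdiff, hiS, hiK]

lemma foldr_P_eq_zero {m : ℕ} (F : (Fin m → A) → M)
    (ha : ∀ (j : Fin m) (x : Fin m → A) (a b : A),
      F (Function.update x j (a + b)) = F (Function.update x j a) + F (Function.update x j b)) :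
    ∀ (l : List A) (K : Finset (Fin m)) (v : Fin m → A), K.card < l.length →
      List.foldr deltaOp (fun a => F (fun i => if i ∈ K then a else v i)) l = 0 := by
  intro l
  induction l using List.reverseRecOn with
  | nil => intro K v h; simp at h
  | append_singleton l c ih =>
    intro K v h
    rw [foldr_deltaOp_append, deltaOp_P F ha, foldr_deltaOp_sum]
    refine Finset.sum_eq_zero ?_
    intro S hS
    rw [Finset.mem_erase, Finset.mem_powerset] at hS
    refine ih (K \ S) _ ?_
    have h1 : (K \ S).card = K.card - S.card := Finset.card_sdiff_of_subset hS.2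
    have h2 : 1 ≤ S.card := Finset.card_pos.2 (Finset.nonempty_iff_ne_empty.2 hS.1)
    have h3 : S.card ≤ K.card := Finset.card_le_card hS.2
    simp only [List.length_append, List.length_singleton] at h
    omega

end S3
section S4
variable {A M : Type*} [AddCommSemigroup A] [AddCommGroup M]

lemma ofFn_cons {k : ℕ} (c : A) (w : Fin k → A) :
    List.ofFn (Fin.cons c w) = c :: List.ofFn w := by
  simp [List.ofFn_succ]

lemma cons_comp_perm {k : ℕ} (c : A) (y : Fin k → A) (σ : Equiv.Perm (Fin k)) :
    Fin.cons c (y ∘ σ) = (Fin.cons c y) ∘ (Equiv.Perm.decomposeFin.symm (0, σ)) := by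
  funext i
  induction i using Fin.cases with
  | zero => simp [Equiv.Perm.decomposeFin_symm_apply_zero]
  | succ i => simp [Equiv.Perm.decomposeFin_symm_apply_succ]

lemma foldr_diag {m : ℕ} : ∀ (F : (Fin m → A) → M)
    (hs : ∀ (σ : Equiv.Perm (Fin m)) (x : Fin m → A), F (x ∘ σ) = F x)
    (ha : ∀ (j : Fin m) (x : Fin m → A) (a b : A),
      F (Function.update x j (a + b)) = F (Function.update x j a) + F (Function.update x j b))
    (u : Fin m → A),
    List.foldr deltaOp (fun a => F (fun _ => a)) (List.ofFn u)
      = fun _ => m.factorial • F u := by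
  induction m with
  | zero =>
    intro F hs ha u
    funext b
    simp only [List.ofFn_zero, List.foldr_nil, Nat.factorial_zero, one_smul]
    congr 1
    exact funext fun i => i.elim0
  | succ m IH =>
    intro F hs ha u
    rw [List.ofFn_succ', List.concat_eq_append, foldr_deltaOp_append]
    set c := u (Fin.last m) with hc
    have hdiag : (fun a => F (fun _ => a))
        = (fun a => F (fun i => if i ∈ (Finset.univ : Finset (Fin (m+1))) then a
            else (fun _ : Fin (m+1) => c) i)) := by
      simp
    rw [hdiag, deltaOp_P F ha, foldr_deltaOp_sum]
    -- kill all terms with S.card ≠ 1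
    have hker : ∀ S ∈ (Finset.univ : Finset (Fin (m+1))).powerset.erase ∅,
        List.foldr deltaOp
          (fun a => F fun i => if i ∈ Finset.univ \ S then a else if i ∈ S then c else c)
          (List.ofFn fun i : Fin m => u i.castSucc) ≠ 0 → S.card = 1 := by
      intro S hS hne
      by_contra hcard
      apply hne
      rw [Finset.mem_erase, Finset.mem_powerset] at hS
      have h2 : 2 ≤ S.card := by
        have := Finset.card_pos.2 (Finset.nonempty_iff_ne_empty.2 hS.1)
        omega
      refine foldr_P_eq_zero F ha _ _ _ ?_
      have hcd : (Finset.univ \ S).card = (m + 1) - S.card := by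
        rw [Finset.card_sdiff_of_subset (Finset.subset_univ S), Finset.card_univ, Fintype.card_fin]
      have hsc : S.card ≤ m + 1 := by
        simpa using Finset.card_le_card (Finset.subset_univ S)
      rw [List.length_ofFn]
      omega
    rw [← Finset.sum_filter_of_ne hker]
    -- the filtered set is the image of singletons
    have hfilter : ((Finset.univ : Finset (Fin (m+1))).powerset.erase ∅).filter
          (fun S => S.card = 1)
        = Finset.univ.image (fun j : Fin (m+1) => ({j} : Finset (Fin (m+1)))) := by
      ext S
      simp only [Finset.mem_filter, Finset.mem_erase, Finset.mem_powerset, Finset.mem_image,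
        Finset.mem_univ, true_and, Finset.card_eq_one]
      constructor
      · rintro ⟨⟨-, -⟩, j, rfl⟩; exact ⟨j, rfl⟩
      · rintro ⟨j, rfl⟩
        exact ⟨⟨Finset.singleton_ne_empty j, Finset.subset_univ _⟩, j, rfl⟩
    rw [hfilter, Finset.sum_image (fun a _ b _ h => Finset.singleton_injective h)]
    -- each term equals the diagonal of the cons function
    have hterm : ∀ j : Fin (m + 1),
        List.foldr deltaOp
          (fun a => F (fun i => if i ∈ Finset.univ \ {j} then a
              else if i ∈ ({j} : Finset (Fin (m+1))) then c else c))
          (List.ofFn fun i : Fin m => u i.castSucc)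
        = fun _ => m.factorial • F (Fin.cons c (fun i : Fin m => u i.castSucc)) := by
      intro j
      have hpat : (fun a => F (fun i => if i ∈ Finset.univ \ {j} then a
          else if i ∈ ({j} : Finset (Fin (m+1))) then c else c))
          = fun a => F (Fin.cons c (fun _ : Fin m => a)) := by
        funext a
        have h1 : (fun i => if i ∈ Finset.univ \ ({j} : Finset (Fin (m+1))) then a
            else if i ∈ ({j} : Finset (Fin (m+1))) then c else c)
            = Function.update (fun _ : Fin (m+1) => a) j c := by
          funext i
          rcases eq_or_ne i j with rfl | hi
          · simp
          · simp [Finset.mem_sdiff, hi, Function.update_of_ne hi]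
        rw [h1, ← hs (Equiv.swap 0 j) (Function.update (fun _ : Fin (m+1) => a) j c),
          Function.update_comp_equiv]
        simp only [Equiv.symm_swap, Equiv.swap_apply_right]
        congr 1
        funext i
        induction i using Fin.cases with
        | zero => simp
        | succ i => simp [Function.update_of_ne (Fin.succ_ne_zero i)]
      rw [hpat]
      exact IH (fun y => F (Fin.cons c y))
        (fun σ y => by
          show F (Fin.cons c (y ∘ ⇑σ)) = F (Fin.cons c y)
          rw [cons_comp_perm, hs])
        (fun j y a b => by
          simp only [Fin.cons_update]
          exact ha j.succ (Fin.cons c y) a b)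
        (fun i => u i.castSucc)
    rw [Finset.sum_congr rfl (fun j _ => hterm j)]
    rw [Finset.sum_const, Finset.card_univ, Fintype.card_fin]
    funext b
    simp only [Pi.smul_apply, smul_smul]
    rw [← Nat.factorial_succ]
    congr 1
    have hrot : Fin.cons c (fun i : Fin m => u i.castSucc)
        = u ∘ (finRotate (m + 1)).symm := by
      funext i
      simp only [Function.comp_apply]
      induction i using Fin.cases with
      | zero =>
        rw [Fin.cons_zero, hc]
        congr 1
        all_goals (symm; rw [Equiv.symm_apply_eq, finRotate_last])
      | succ i =>
        rw [Fin.cons_succ]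
        congr 1
        symm
        rw [Equiv.symm_apply_eq, finRotate_succ_apply, Fin.coeSucc_eq_succ]
    rw [hrot, hs]

end S4
section S5
variable {A M : Type*} [AddCommSemigroup A] [AddCommGroup M]

instance : LeftCommutative (deltaOp (A := A) (M := M)) := ⟨deltaOp_leftComm⟩

lemma ofFn_comp_perm {k : ℕ} (x : Fin k → A) (σ : Equiv.Perm (Fin k)) :
    (List.ofFn (x ∘ σ)).Perm (List.ofFn x) := by
  have h1 : List.ofFn (x ∘ σ) = List.map x (List.ofFn σ) :=
    List.map_ofFn.symm
  have h2 : List.ofFn x = List.map x (List.finRange k) := List.ofFn_eq_map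
  rw [h1, h2]
  refine List.Perm.map x ?_
  refine List.perm_of_nodup_nodup_toFinset_eq ?_ ?_ ?_
  · exact (List.nodup_ofFn).2 σ.injective
  · exact List.nodup_finRange k
  · ext i
    simp [List.mem_ofFn, List.mem_finRange]
    exact σ.surjective i

lemma add_of_symm_add_zero {m : ℕ} (G : (Fin (m + 1) → A) → M)
    (hs : ∀ (σ : Equiv.Perm (Fin (m + 1))) (x : Fin (m + 1) → A), G (x ∘ σ) = G x)
    (h0 : ∀ (x : Fin (m + 1) → A) (a b : A), G (Function.update x 0 (a + b))
      = G (Function.update x 0 a) + G (Function.update x 0 b)) :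
    ∀ (j : Fin (m + 1)) (x : Fin (m + 1) → A) (a b : A),
      G (Function.update x j (a + b)) = G (Function.update x j a) + G (Function.update x j b) := by
  intro j x a b
  have key : ∀ (c : A) (x : Fin (m + 1) → A),
      G (Function.update x j c) = G (Function.update (x ∘ Equiv.swap 0 j) 0 c) := by
    intro c x
    rw [← hs (Equiv.swap 0 j) (Function.update x j c), Function.update_comp_equiv]
    simp [Equiv.swap_apply_right]
  rw [key, key, key, h0]

theorem key_induction [Nonempty A]
    (hA : ∀ d : ℕ, 1 ≤ d → Function.Bijective (fun x : A => psmul (Nat.factorial d) x)) :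
    ∀ (n : ℕ) (f : A → M),
    (∀ u : Fin (n + 1) → A, List.foldr deltaOp f (List.ofFn u) = 0) →
    ∃ F : (k : ℕ) → (Fin k → A) → M,
      (∀ k ≤ n, ∀ (σ : Equiv.Perm (Fin k)) (x : Fin k → A), F k (x ∘ σ) = F k x) ∧
      (∀ k ≤ n, ∀ (j : Fin k) (x : Fin k → A) (a b : A),
        F k (Function.update x j (a + b))
          = F k (Function.update x j a) + F k (Function.update x j b)) ∧
      (∀ a : A, f a = ∑ k ∈ Finset.range (n + 1), F k (fun _ => a)) := by
  intro n
  induction n with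
  | zero =>
    intro f hf
    have a₀ : A := Classical.arbitrary A
    refine ⟨fun k _ => if k = 0 then f a₀ else 0, ?_, ?_, ?_⟩
    · intro k hk σ x; rfl
    · intro k hk j x a b
      have hk0 : k = 0 := Nat.le_zero.mp hk
      subst hk0
      exact j.elim0
    · intro a
      have hconst : ∀ x v : A, f (x + v) = f x := by
        intro x v
        have h1 := hf (fun _ => v)
        have h2 : List.ofFn (fun _ : Fin 1 => v) = [v] := by simp
        rw [h2] at h1
        have := congrFun h1 x
        simpa [deltaOp, sub_eq_zero] using this
      have : f a = f a₀ := by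
        calc f a = f (a + a₀) := (hconst a a₀).symm
          _ = f (a₀ + a) := by rw [add_comm]
          _ = f a₀ := hconst a₀ a
      simp [this]
  | succ n IH =>
    intro f hf
    have a₀ : A := Classical.arbitrary A
    have hconstD : ∀ (u : Fin (n + 1) → A) (v : A),
        deltaOp v (List.foldr deltaOp f (List.ofFn u)) = 0 := by
      intro u v
      have h1 := hf (Fin.cons v u)
      rw [ofFn_cons] at h1
      exact h1
    set g : (Fin (n + 1) → A) → M := fun u => List.foldr deltaOp f (List.ofFn u) a₀ with hg
    have hDconst : ∀ u : Fin (n + 1) → A,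
        List.foldr deltaOp f (List.ofFn u) = fun _ => g u := by
      intro u
      funext b
      exact eq_of_deltaOp_eq_zero _ (hconstD u) b a₀
    -- symmetry of g
    have hgs : ∀ (σ : Equiv.Perm (Fin (n + 1))) (x : Fin (n + 1) → A), g (x ∘ σ) = g x := by
      intro σ x
      simp only [hg]
      rw [(ofFn_comp_perm x σ).foldr_eq f]
    -- additivity of g in slot 0
    have hg0 : ∀ (x : Fin (n + 1) → A) (a b : A),
        g (Function.update x 0 (a + b))
          = g (Function.update x 0 a) + g (Function.update x 0 b) := by
      intro x a b
      have hofn : ∀ c : A, List.ofFn (Function.update x 0 c)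
          = c :: List.ofFn (fun i : Fin n => x i.succ) := by
        intro c
        rw [List.ofFn_succ]
        have h1 : Function.update x 0 c 0 = c := Function.update_self _ _ _
        have h2 : (fun i : Fin n => Function.update x 0 c i.succ)
            = fun i : Fin n => x i.succ :=
          funext fun i => Function.update_of_ne (Fin.succ_ne_zero i) _ _
        rw [h1, h2]
      simp only [hg, hofn, List.foldr_cons]
      set R := List.foldr deltaOp f (List.ofFn (fun i : Fin n => x i.succ)) with hR
      have hz : deltaOp b (deltaOp a R) = 0 := by
        have h1 := hf (Fin.cons b (Fin.cons a (fun i : Fin n => x i.succ)))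
        rw [ofFn_cons, ofFn_cons] at h1
        exact h1
      rw [deltaOp_add_add]
      have := congrFun hz
      simp only [Pi.add_apply]
      rw [show deltaOp b (deltaOp a R) a₀ = 0 from congrFun hz a₀]
      abel
    have hga := add_of_symm_add_zero g hgs hg0
    -- the division structure
    set d := (n + 1).factorial with hd
    have hd1 : 1 ≤ d := Nat.one_le_iff_ne_zero.mpr (Nat.factorial_ne_zero (n + 1))
    set e : A ≃ A := Equiv.ofBijective _ (hA (n + 1) (by omega)) with he
    have heap : ∀ y : A, psmul d y = e y := fun y => rfl
    have hψ : ∀ y : A, psmul d (e.symm y) = y := by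
      intro y
      rw [heap, e.apply_symm_apply]
    have hψadd : ∀ a b : A, e.symm (a + b) = e.symm a + e.symm b := by
      intro a b
      apply e.injective
      rw [e.apply_symm_apply, ← heap, psmul_add, hψ, hψ]
    -- the top coefficient
    set T : (Fin (n + 1) → A) → M :=
      fun x => g (Function.update x 0 (e.symm (x 0))) with hT
    -- W-invariance
    have hW : ∀ (j : Fin (n + 1)) (x : Fin (n + 1) → A),
        g (Function.update x j (e.symm (x j))) = T x := by
      intro j x
      rcases eq_or_ne j 0 with rfl | hj
      · rfl
      have h1 : d • g (Function.update (Function.update x j (e.symm (x j))) 0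
            (e.symm (x 0)))
          = g (Function.update x j (e.symm (x j))) := by
        rw [← smul_out g 0 (fun y a b => hga 0 y a b) d hd1, hψ]
        have : (Function.update x j (e.symm (x j))) 0 = x 0 :=
          Function.update_of_ne (Ne.symm hj) _ _
        rw [← this, Function.update_eq_self]
      have h2 : d • g (Function.update (Function.update x j (e.symm (x j))) 0
            (e.symm (x 0)))
          = g (Function.update x 0 (e.symm (x 0))) := by
        rw [Function.update_comm hj]
        rw [← smul_out g j (fun y a b => hga j y a b) d hd1, hψ]
        have : (Function.update x 0 (e.symm (x 0))) j = x j :=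
          Function.update_of_ne hj _ _
        rw [← this, Function.update_eq_self]
      rw [← h1, h2]
    -- symmetry of T
    have hTs : ∀ (σ : Equiv.Perm (Fin (n + 1))) (x : Fin (n + 1) → A), T (x ∘ σ) = T x := by
      intro σ x
      have h1 : Function.update (x ∘ σ) 0 (e.symm (x (σ 0)))
          = (Function.update x (σ 0) (e.symm (x (σ 0)))) ∘ σ := by
        rw [Function.update_comp_equiv]
        simp
      show g (Function.update (x ∘ σ) 0 (e.symm ((x ∘ σ) 0))) = T x
      rw [show (x ∘ σ) 0 = x (σ 0) from rfl, h1, hgs, hW]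
    -- additivity of T in slot 0
    have hT0 : ∀ (x : Fin (n + 1) → A) (a b : A),
        T (Function.update x 0 (a + b))
          = T (Function.update x 0 a) + T (Function.update x 0 b) := by
      intro x a b
      have hx : ∀ c : A, T (Function.update x 0 c) = g (Function.update x 0 (e.symm c)) := by
        intro c
        show g (Function.update (Function.update x 0 c) 0
            (e.symm ((Function.update x 0 c) 0))) = _
        rw [Function.update_self, Function.update_idem]
      rw [hx, hx, hx, hψadd, hg0]
    have hTa := add_of_symm_add_zero T hTs hT0
    -- d • T u = g u
    have hdT : ∀ u : Fin (n + 1) → A, d • T u = g u := by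
      intro u
      rw [hT]
      rw [← smul_out g 0 (fun y a b => hga 0 y a b) d hd1, hψ, Function.update_eq_self]
    -- subtract top term
    set h : A → M := fun a => f a - T (fun _ => a) with hh
    have hfh : ∀ u : Fin (n + 1) → A, List.foldr deltaOp h (List.ofFn u) = 0 := by
      intro u
      have hsub : h = f - (fun a => T (fun _ => a)) := rfl
      rw [hsub, foldr_deltaOp_sub, hDconst u, foldr_diag T hTs hTa u]
      funext b
      simp only [Pi.sub_apply, Pi.zero_apply]
      rw [show (n + 1).factorial • T u = g u from hdT u]
      exact sub_self _
    obtain ⟨F', hF's, hF'a, hF'sum⟩ := IH h hfh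
    refine ⟨fun k => if hk : k = n + 1
      then (fun x => T (fun i => x (Fin.cast hk.symm i))) else F' k, ?_, ?_, ?_⟩
    · intro k hk σ x
      beta_reduce
      split
      · next hkk => subst hkk; exact hTs σ x
      · next hkk => exact hF's k (by omega) σ x
    · intro k hk j x a b
      beta_reduce
      split
      · next hkk => subst hkk; exact hTa j x a b
      · next hkk => exact hF'a k (by omega) j x a b
    · intro a
      beta_reduce
      rw [Finset.sum_range_succ]
      have hlast : (if hk : n + 1 = n + 1
          then (fun x : Fin (n+1) → A => T (fun i => x (Fin.cast hk.symm i)))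
          else F' (n + 1)) (fun _ => a) = T (fun _ => a) := by
        split
        · rfl
        · next hkk => exact absurd rfl hkk
      have hrest : ∀ k ∈ Finset.range (n + 1),
          (if hk : k = n + 1
            then (fun x : Fin k → A => T (fun i => x (Fin.cast hk.symm i)))
            else F' k) (fun _ => a) = F' k (fun _ => a) := by
        intro k hkr
        rw [Finset.mem_range] at hkr
        split
        · next hkk => omega
        · rfl
      rw [hlast, Finset.sum_congr rfl hrest]
      have h2 : f a - (T fun _ : Fin (n + 1) => a)
          = ∑ k ∈ Finset.range (n + 1), F' k fun _ => a := hF'sum a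
      rw [← h2]
      abel

end S5

theorem stmt5 {A M : Type*} [AddCommSemigroup A] [AddCommGroup M]
    (hA : ∀ d : ℕ, 1 ≤ d → Function.Bijective (fun x : A => psmul (Nat.factorial d) x))
    (f : A → M) {n : ℕ}
    (hf : ∀ u : Fin (n + 1) → A, List.foldr deltaOp f (List.ofFn u) = 0) :
    ∃ F : (k : ℕ) → (Fin k → A) → M,
      (∀ k ≤ n, ∀ (σ : Equiv.Perm (Fin k)) (x : Fin k → A), F k (x ∘ σ) = F k x) ∧
      (∀ k ≤ n, ∀ (j : Fin k) (x : Fin k → A) (a b : A),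
        F k (Function.update x j (a + b))
          = F k (Function.update x j a) + F k (Function.update x j b)) ∧
      (∀ a : A, f a = ∑ k ∈ Finset.range (n + 1), F k (fun _ => a)) := by
  rcases isEmpty_or_nonempty A with hA' | hA'
  · exact ⟨fun k x => 0, fun k hk σ x => rfl,
      fun k hk j x a b => (hA'.false a).elim,
      fun a => (hA'.false a).elim⟩
  · exact key_induction hA n f hf
end

section
/- Let M be an abelian group, n ≥ 1, and f : [0,∞) → M a function with Δ_{u_1} ⋯ Δ_{u_{n+1}} f = 0 for all u_1, …, u_{n+1} ∈ [0,∞). Define h : [0,∞)^n → M by h(u_1, …, u_n) = (Δ_{u_1} ⋯ Δ_{u_n} f)(a) for any a (this is independent of a). Then h is symmetric and is an additive homomorphism in each of its n variables. -/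
open scoped NNReal

lemma deltaOp_comm {M : Type*} [AddCommGroup M] (u v : ℝ≥0) (f : ℝ≥0 → M) :
    deltaOp u (deltaOp v f) = deltaOp v (deltaOp u f) := by
  funext a
  simp only [deltaOp]
  rw [add_right_comm a v u]
  abel

instance instLC {M : Type*} [AddCommGroup M] :
    LeftCommutative (deltaOp : ℝ≥0 → (ℝ≥0 → M) → (ℝ≥0 → M)) :=
  ⟨fun u v f => deltaOp_comm u v f⟩

theorem stmt19 {M : Type*} [AddCommGroup M] {n : ℕ} (hn : 1 ≤ n)
    (f : ℝ≥0 → M)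
    (hf : ∀ u : Fin (n + 1) → ℝ≥0, List.foldr deltaOp f (List.ofFn u) = 0)
    -- `h u = Δ_{u_1} ⋯ Δ_{u_n} f`, a constant, here read off at `0`:
    (h : (Fin n → ℝ≥0) → M)
    (hh : ∀ u : Fin n → ℝ≥0, h u = List.foldr deltaOp f (List.ofFn u) 0) :
    -- the iterated difference is indeed independent of the point of evaluation:
    (∀ (u : Fin n → ℝ≥0) (a : ℝ≥0), List.foldr deltaOp f (List.ofFn u) a = h u) ∧
    -- h is symmetric:
    (∀ (σ : Equiv.Perm (Fin n)) (u : Fin n → ℝ≥0), h (u ∘ σ) = h u) ∧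
    -- h is an additive homomorphism in each variable:
    ∀ (i : Fin n) (u : Fin n → ℝ≥0) (a b : ℝ≥0),
      h (Function.update u i (a + b))
        = h (Function.update u i a) + h (Function.update u i b) := by
  -- constancy
  have hconst : ∀ (u : Fin n → ℝ≥0) (a : ℝ≥0),
      List.foldr deltaOp f (List.ofFn u) a = h u := by
    intro u a
    have h0 := hf (Fin.cons a u)
    rw [List.ofFn_succ] at h0
    simp only [Fin.cons_zero, Fin.cons_succ] at h0
    have := congrFun h0 0
    simp only [List.foldr_cons, deltaOp, Pi.zero_apply, zero_add] at this
    rw [hh u]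
    exact sub_eq_zero.mp this
  have hsymm : ∀ (σ : Equiv.Perm (Fin n)) (u : Fin n → ℝ≥0), h (u ∘ σ) = h u := by
    intro σ u
    rw [hh, hh]
    exact congrFun (List.Perm.foldr_eq (lcomm := instLC) (Equiv.Perm.ofFn_comp_perm σ u) f) 0
  refine ⟨hconst, hsymm, ?_⟩
  -- additivity
  obtain ⟨m, rfl⟩ : ∃ m, n = m + 1 := ⟨n - 1, (Nat.succ_pred_eq_of_pos hn).symm⟩
  -- reduce to the first variable via symmetry
  have hupd : ∀ (i : Fin (m + 1)) (u : Fin (m + 1) → ℝ≥0) (x : ℝ≥0),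
      h (Function.update u i x)
        = h (Function.update (u ∘ Equiv.swap 0 i) 0 x) := by
    intro i u x
    rw [← hsymm (Equiv.swap 0 i) (Function.update u i x)]
    congr 1
    funext j
    rcases eq_or_ne j 0 with rfl | hj
    · simp [Function.update, Equiv.swap_apply_left]
    · have h1 : Equiv.swap (0 : Fin (m + 1)) i j ≠ i := by
        rw [Ne, Equiv.swap_apply_eq_iff, Equiv.swap_apply_right]
        exact hj
      simp [Function.comp, Function.update, hj, h1]
  -- additivity at the first variable
  have hadd0 : ∀ (v : Fin (m + 1) → ℝ≥0) (a b : ℝ≥0),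
      h (Function.update v 0 (a + b))
        = h (Function.update v 0 a) + h (Function.update v 0 b) := by
    intro v a b
    have hlist : ∀ x : ℝ≥0, List.ofFn (Function.update v 0 x)
        = x :: List.ofFn (fun j : Fin m => v j.succ) := by
      intro x
      have htail : (fun j : Fin m => Function.update v 0 x j.succ) = fun j => v j.succ := by
        funext j
        exact Function.update_of_ne (Fin.succ_ne_zero j) _ _
      rw [List.ofFn_succ, Function.update_self, htail]
    set g : ℝ≥0 → M := List.foldr deltaOp f (List.ofFn fun j : Fin m => v j.succ) with hg
    have hval : ∀ x : ℝ≥0, h (Function.update v 0 x) = g x - g 0 := by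
      intro x
      rw [hh, hlist x, List.foldr_cons]
      simp [deltaOp, zero_add, hg]
    -- the (n+1)-fold difference of f vanishes: Δ_b Δ_a g = 0
    have hzero := hf (Fin.cons b (Fin.cons a (fun j : Fin m => v j.succ)))
    rw [List.ofFn_succ] at hzero
    simp only [Fin.cons_zero, Fin.cons_succ] at hzero
    rw [List.ofFn_succ] at hzero
    simp only [Fin.cons_zero, Fin.cons_succ] at hzero
    have h2 := congrFun hzero 0
    simp only [List.foldr_cons, ← hg, deltaOp, Pi.zero_apply, zero_add] at h2
    -- h2 : g (b + a) - g a - (g b - g 0) = 0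
    rw [hval, hval, hval]
    have hba : g (a + b) = g (b + a) := by rw [add_comm]
    have h3 := sub_eq_zero.mp h2
    rw [hba]
    calc g (b + a) - g 0 = (g (b + a) - g b) + (g b - g 0) := by abel
      _ = (g a - g 0) + (g b - g 0) := by rw [h3]
  intro i u a b
  rw [hupd i u (a + b), hupd i u a, hupd i u b]
  exact hadd0 _ a b
end
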